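/- For every integer n ≥ 1 there exists a 2-stretch correlated sampling algorithm for the probability simplex Δ_n. -/

import Mathlib

open MeasureTheory Real Set
open scoped ENNReal

/-- `x ∈ Δ_n`: all coordinates in `[0,1]` and the coordinates sum to `1`. -/
def memSimplex (n : ℕ) (x : Fin n → ℝ) : Prop :=
  (∀ i, 0 ≤ x i ∧ x i ≤ 1) ∧ ∑ i, x i = 1

/-- An `α`-stretch correlated sampling algorithm for the probability simplex `Δ_n` on the
probability space `(Ω, μ)`: (P1) the output is always a singleton, (P2) marginals,
(P3) stretch. -/
def SimplexCorrSampling (n : ℕ) (α : ℝ) {Ω : Type}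
    [MeasurableSpace Ω] (μ : Measure Ω)
    (A : Ω → (Fin n → ℝ) → Finset (Fin n)) : Prop :=
  (∀ ω x, memSimplex n x → (A ω x).card = 1) ∧
  (∀ x, memSimplex n x → ∀ i : Fin n,
    MeasurableSet {ω | i ∈ A ω x} ∧ μ {ω | i ∈ A ω x} = ENNReal.ofReal (x i)) ∧
  (∀ x y, memSimplex n x → memSimplex n y →
    ∫⁻ ω, ((symmDiff (A ω x) (A ω y)).card : ℝ≥0∞) ∂μ ≤
      ENNReal.ofReal (α * ∑ i, |x i - y i|))


noncomputable def expM : Measure ℝ :=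
  (volume.restrict (Set.Ioi (0:ℝ))).withDensity fun t => ENNReal.ofReal (Real.exp (-t))

lemma expM_apply {s : Set ℝ} (hs : MeasurableSet s) :
    expM s = ∫⁻ t in s ∩ Set.Ioi 0, ENNReal.ofReal (Real.exp (-t)) := by
  rw [expM, withDensity_apply _ hs, Measure.restrict_restrict hs]

lemma expM_Ioi {a : ℝ} (ha : 0 ≤ a) :
    expM (Set.Ioi a) = ENNReal.ofReal (Real.exp (-a)) := by
  rw [expM_apply measurableSet_Ioi]
  have h1 : Set.Ioi a ∩ Set.Ioi 0 = Set.Ioi a := by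
    rw [Set.inter_eq_left]; exact fun t ht => lt_of_le_of_lt ha ht
  rw [h1, ← ofReal_integral_eq_lintegral_ofReal]
  · rw [integral_exp_neg_Ioi]
  · exact (by simpa using exp_neg_integrableOn_Ioi a one_pos : IntegrableOn (fun x => rexp (-x)) (Ioi a) volume)
  · exact Filter.Eventually.of_forall fun t => (exp_pos _).le

lemma expM_Iic : expM (Set.Iic (0:ℝ)) = 0 := by
  rw [expM_apply measurableSet_Iic]
  have : Set.Iic (0:ℝ) ∩ Set.Ioi 0 = ∅ := by
    ext t
    simp only [Set.mem_inter_iff, Set.mem_Iic, Set.mem_Ioi, Set.mem_empty_iff_false, iff_false,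
      not_and, not_lt]
    exact fun h => h
  simp [this]

instance expM_prob : IsProbabilityMeasure expM := by
  constructor
  have : (Set.univ : Set ℝ) = Set.Iic 0 ∪ Set.Ioi 0 := by
    ext t; simp [le_or_gt]
  rw [this, measure_union _ measurableSet_Ioi, expM_Iic, expM_Ioi le_rfl]
  · simp
  · intro s hs1 hs2 t ht
    have h1 := hs1 ht; have h2 := hs2 ht
    simp only [Set.mem_Iic] at h1; simp only [Set.mem_Ioi] at h2
    exact absurd h2 (not_lt.2 h1)

lemma lintegral_exp_neg_mul {b : ℝ} (hb : 0 < b) :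
    ∫⁻ t in Set.Ioi (0:ℝ), ENNReal.ofReal (Real.exp (-(b * t))) = ENNReal.ofReal (1 / b) := by
  rw [← ofReal_integral_eq_lintegral_ofReal]
  · congr 1
    have := integral_comp_mul_left_Ioi (fun x => Real.exp (-x)) 0 hb
    simp only [mul_zero] at this
    rw [show (fun t : ℝ => Real.exp (-(b * t))) = (fun t : ℝ => Real.exp (-(b * t))) from rfl]
    calc ∫ t in Set.Ioi (0:ℝ), Real.exp (-(b * t))
        = ∫ t in Set.Ioi (0:ℝ), (fun x => Real.exp (-x)) (b * t) := by norm_num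
      _ = b⁻¹ • ∫ x in Set.Ioi (0:ℝ), Real.exp (-x) := this
      _ = 1 / b := by rw [integral_exp_neg_Ioi]; simp [one_div]
  · have := exp_neg_integrableOn_Ioi 0 hb
    exact (by simpa [neg_mul] using this : IntegrableOn (fun t => rexp (-(b * t))) (Ioi 0) volume)
  · exact Filter.Eventually.of_forall fun t => (exp_pos _).le

noncomputable def piExp (n : ℕ) : Measure (Fin n → ℝ) := Measure.pi fun _ => expM

instance (n : ℕ) : IsProbabilityMeasure (piExp n) :=
  MeasureTheory.Measure.pi.instIsProbabilityMeasure _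

lemma core_measure {m : ℕ} (i : Fin (m+1)) (c : Fin (m+1) → ℝ) (hc : ∀ j, 0 ≤ c j) :
    piExp (m+1) {ω | ∀ j, j ≠ i → c j * ω i < ω j}
      = ENNReal.ofReal (1 / (1 + ∑ j, if j = i then 0 else c j)) := by
  classical
  set ν : Measure (Fin m → ℝ) := Measure.pi fun _ => expM with hν
  have hmp := measurePreserving_piFinSuccAbove (fun _ : Fin (m+1) => expM) i
  set e := MeasurableEquiv.piFinSuccAbove (fun _ : Fin (m+1) => ℝ) i with he
  set B : Set (ℝ × (Fin m → ℝ)) := {p | ∀ j, c (i.succAbove j) * p.1 < p.2 j} with hBdef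
  have hB : MeasurableSet B := by
    have : B = ⋂ j, {p : ℝ × (Fin m → ℝ) | c (i.succAbove j) * p.1 < p.2 j} := by
      ext p; simp [hBdef]
    rw [this]
    exact MeasurableSet.iInter fun j =>
      measurableSet_lt (measurable_fst.const_mul _) ((measurable_pi_apply j).comp measurable_snd)
  have hpre : e ⁻¹' B = {ω | ∀ j, j ≠ i → c j * ω i < ω j} := by
    ext ω
    have happ : e ω = (ω i, fun j => ω (i.succAbove j)) := rfl
    simp only [Set.mem_preimage, happ, hBdef, Set.mem_setOf_eq]
    constructor
    · intro h j hj
      obtain ⟨k, rfl⟩ := Fin.exists_succAbove_eq hj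
      exact h k
    · intro h k
      exact h _ (i.succAbove_ne k)
  rw [← hpre, piExp, hmp.measure_preimage hB.nullMeasurableSet, Measure.prod_apply hB]
  have hslice : ∀ t : ℝ, (Prod.mk t ⁻¹' B) = Set.pi Set.univ (fun j => Set.Ioi (c (i.succAbove j) * t)) := by
    intro t; ext v; simp [hBdef, Set.mem_pi]
  have hinner : ∀ t : ℝ, ν (Prod.mk t ⁻¹' B) = ∏ j, expM (Set.Ioi (c (i.succAbove j) * t)) := by
    intro t; rw [hslice t, hν, Measure.pi_pi]
  rw [← hν]
  simp only [hinner]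
  have hwd := lintegral_withDensity_eq_lintegral_mul_non_measurable
    (volume.restrict (Set.Ioi (0:ℝ)))
    (f := fun t => ENNReal.ofReal (Real.exp (-t)))
    (ENNReal.measurable_ofReal.comp (Real.measurable_exp.comp measurable_neg))
    (Filter.Eventually.of_forall fun t => ENNReal.ofReal_lt_top)
    (fun t => ∏ j, expM (Set.Ioi (c (i.succAbove j) * t)))
  have hexp : (∫⁻ t, (∏ j, expM (Set.Ioi (c (i.succAbove j) * t))) ∂expM)
      = ∫⁻ t in Set.Ioi (0:ℝ),
          (ENNReal.ofReal (Real.exp (-t)) * ∏ j, expM (Set.Ioi (c (i.succAbove j) * t))) := by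
    rw [expM] at hwd ⊢
    rw [hwd]
    simp [Pi.mul_apply]
  rw [hexp]
  have hcongr : ∀ t ∈ Set.Ioi (0:ℝ),
      (ENNReal.ofReal (Real.exp (-t)) * ∏ j, expM (Set.Ioi (c (i.succAbove j) * t)))
        = ENNReal.ofReal (Real.exp (-((1 + ∑ j, c (i.succAbove j)) * t))) := by
    intro t ht
    have ht0 : 0 < t := ht
    have hprod : (∏ j, expM (Set.Ioi (c (i.succAbove j) * t)))
        = ENNReal.ofReal (∏ j, Real.exp (-(c (i.succAbove j) * t))) := by
      rw [ENNReal.ofReal_prod_of_nonneg (fun j _ => (exp_pos _).le)]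
      exact Finset.prod_congr rfl fun j _ =>
        expM_Ioi (mul_nonneg (hc _) ht0.le)
    rw [hprod, ← ENNReal.ofReal_mul (exp_pos _).le, ← Real.exp_sum, ← Real.exp_add]
    congr 1
    rw [Finset.sum_neg_distrib, ← Finset.sum_mul]
    ring_nf
  rw [setLIntegral_congr_fun measurableSet_Ioi hcongr]
  have hbpos : 0 < 1 + ∑ j, c (i.succAbove j) :=
    lt_add_of_pos_of_le one_pos (Finset.sum_nonneg fun j _ => hc _)
  rw [lintegral_exp_neg_mul hbpos]
  congr 2
  rw [Fin.sum_univ_succAbove (fun j => if j = i then 0 else c j) i]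
  simp [Fin.succAbove_ne]

open scoped Classical in
noncomputable def supp (n : ℕ) (x : Fin n → ℝ) : Finset (Fin n) :=
  Finset.univ.filter fun i => 0 < x i

lemma mem_supp {n : ℕ} {x : Fin n → ℝ} {i : Fin n} : i ∈ supp n x ↔ 0 < x i := by
  classical
  simp [supp]

open scoped Classical in
noncomputable def cand (n : ℕ) (ω x : Fin n → ℝ) : Finset (Fin n) :=
  (supp n x).filter fun i => ∀ j ∈ supp n x, ω i * x j ≤ ω j * x i

lemma mem_cand {n : ℕ} {ω x : Fin n → ℝ} {i : Fin n} :
    i ∈ cand n ω x ↔ i ∈ supp n x ∧ ∀ j ∈ supp n x, ω i * x j ≤ ω j * x i := by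
  classical
  simp [cand]

noncomputable def pick (n : ℕ) (i₀ : Fin n) (ω x : Fin n → ℝ) : Fin n :=
  if h : (cand n ω x).Nonempty then (cand n ω x).min' h else i₀

lemma supp_nonempty {n : ℕ} {x : Fin n → ℝ} (hx : memSimplex n x) : (supp n x).Nonempty := by
  by_contra h
  rw [Finset.not_nonempty_iff_eq_empty] at h
  have : ∑ i, x i = 0 := by
    apply Finset.sum_eq_zero
    intro i _
    have h1 := (hx.1 i).1
    have h2 : ¬ 0 < x i := by
      intro hlt
      exact (h ▸ (mem_supp.2 hlt) : i ∈ (∅ : Finset (Fin n)))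
        |> Finset.notMem_empty i
    linarith
  rw [hx.2] at this; norm_num at this

lemma cand_nonempty {n : ℕ} {x : Fin n → ℝ} (hx : memSimplex n x) (ω : Fin n → ℝ) :
    (cand n ω x).Nonempty := by
  obtain ⟨i, hi, hmin⟩ :=
    Finset.exists_min_image (supp n x) (fun i => ω i / x i) (supp_nonempty hx)
  refine ⟨i, mem_cand.2 ⟨hi, fun j hj => ?_⟩⟩
  have hxi : 0 < x i := mem_supp.1 hi
  have hxj : 0 < x j := mem_supp.1 hj
  have := hmin j hj
  rwa [div_le_div_iff₀ hxi hxj] at this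

lemma pick_eq_iff {n : ℕ} {x : Fin n → ℝ} (hx : memSimplex n x) (i₀ : Fin n)
    (ω : Fin n → ℝ) {i : Fin n} :
    pick n i₀ ω x = i ↔ i ∈ cand n ω x ∧ ∀ k ∈ cand n ω x, i ≤ k := by
  have h := cand_nonempty hx ω
  rw [pick, dif_pos h]
  constructor
  · rintro rfl
    exact ⟨Finset.min'_mem _ _, fun k hk => Finset.min'_le _ _ hk⟩
  · rintro ⟨h1, h2⟩
    exact le_antisymm (Finset.min'_le _ _ h1) (h2 _ (Finset.min'_mem _ _))

lemma pick_mem_supp {n : ℕ} {x : Fin n → ℝ} (hx : memSimplex n x) (i₀ : Fin n)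
    (ω : Fin n → ℝ) : pick n i₀ ω x ∈ supp n x := by
  have h := cand_nonempty hx ω
  rw [pick, dif_pos h]
  exact (mem_cand.1 (Finset.min'_mem _ h)).1

/-- the key event sets -/
def Sset (n : ℕ) (x : Fin n → ℝ) (i : Fin n) : Set (Fin n → ℝ) :=
  {ω | ∀ j, j ≠ i → x j * ω i < x i * ω j}

lemma Sset_measurable (n : ℕ) (x : Fin n → ℝ) (i : Fin n) : MeasurableSet (Sset n x i) := by
  have : Sset n x i = ⋂ j, {ω : Fin n → ℝ | j ≠ i → x j * ω i < x i * ω j} := by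
    ext ω; simp [Sset]
  rw [this]
  refine MeasurableSet.iInter fun j => ?_
  by_cases hj : j = i
  · simp [hj]
  · have : {ω : Fin n → ℝ | j ≠ i → x j * ω i < x i * ω j}
        = {ω : Fin n → ℝ | x j * ω i < x i * ω j} := by
      ext ω; simp [hj]
    rw [this]
    exact measurableSet_lt (by fun_prop)
      (by fun_prop)

lemma Sset_disjoint {n : ℕ} {x : Fin n → ℝ} {i k : Fin n} (hik : i ≠ k) :
    Sset n x i ∩ Sset n x k = ∅ := by
  ext ω
  simp only [Set.mem_inter_iff, Set.mem_empty_iff_false, iff_false, not_and]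
  intro h1 h2
  have ha := h1 k (Ne.symm hik)
  have hb := h2 i hik
  linarith

lemma Sset_subset_pick {n : ℕ} {x : Fin n → ℝ} (hx : memSimplex n x) (i₀ : Fin n)
    {i : Fin n} (hi : 0 < x i) :
    Sset n x i ⊆ {ω | pick n i₀ ω x = i} := by
  intro ω hω
  rw [Set.mem_setOf_eq, pick_eq_iff hx]
  have hcand : i ∈ cand n ω x := by
    refine mem_cand.2 ⟨mem_supp.2 hi, fun j hj => ?_⟩
    by_cases hji : j = i
    · subst hji; exact le_rfl
    · have := hω j hji
      nlinarith [this]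
  refine ⟨hcand, fun k hk => ?_⟩
  by_cases hki : k = i
  · subst hki; exact le_rfl
  · exfalso
    have h1 : ω k * x i ≤ ω i * x k := (mem_cand.1 hk).2 i (mem_supp.2 hi)
    have h2 : x k * ω i < x i * ω k := hω k hki
    nlinarith

lemma cand_set_measurable (n : ℕ) (x : Fin n → ℝ) (k : Fin n) :
    MeasurableSet {ω : Fin n → ℝ | k ∈ cand n ω x} := by
  by_cases hk : k ∈ supp n x
  · have : {ω : Fin n → ℝ | k ∈ cand n ω x}
        = ⋂ j, {ω : Fin n → ℝ | j ∈ supp n x → ω k * x j ≤ ω j * x k} := by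
      ext ω
      simp only [Set.mem_setOf_eq, mem_cand, hk, true_and, Set.mem_iInter]
    rw [this]
    refine MeasurableSet.iInter fun j => ?_
    by_cases hj : j ∈ supp n x
    · have : {ω : Fin n → ℝ | j ∈ supp n x → ω k * x j ≤ ω j * x k}
          = {ω : Fin n → ℝ | ω k * x j ≤ ω j * x k} := by
        ext ω; simp [hj]
      rw [this]
      exact measurableSet_le (by fun_prop)
        (by fun_prop)
    · have : {ω : Fin n → ℝ | j ∈ supp n x → ω k * x j ≤ ω j * x k} = Set.univ := by
        ext ω; simp [hj]
      rw [this]; exact MeasurableSet.univ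
  · have : {ω : Fin n → ℝ | k ∈ cand n ω x} = ∅ := by
      ext ω
      simp only [Set.mem_setOf_eq, mem_cand, Set.mem_empty_iff_false, iff_false, not_and]
      intro h; exact absurd h hk
    rw [this]; exact MeasurableSet.empty

lemma pick_set_measurable {n : ℕ} {x : Fin n → ℝ} (hx : memSimplex n x) (i₀ i : Fin n) :
    MeasurableSet {ω : Fin n → ℝ | pick n i₀ ω x = i} := by
  have : {ω : Fin n → ℝ | pick n i₀ ω x = i}
      = {ω : Fin n → ℝ | i ∈ cand n ω x} ∩ ⋂ k, {ω : Fin n → ℝ | k ∈ cand n ω x → i ≤ k} := by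
    ext ω
    simp only [Set.mem_setOf_eq, pick_eq_iff hx, Set.mem_inter_iff, Set.mem_iInter]
  rw [this]
  refine (cand_set_measurable n x i).inter (MeasurableSet.iInter fun k => ?_)
  by_cases hik : i ≤ k
  · have : {ω : Fin n → ℝ | k ∈ cand n ω x → i ≤ k} = Set.univ := by ext ω; simp [hik]
    rw [this]; exact MeasurableSet.univ
  · have : {ω : Fin n → ℝ | k ∈ cand n ω x → i ≤ k} = {ω : Fin n → ℝ | k ∈ cand n ω x}ᶜ := by
      ext ω; simp [hik]
    rw [this]; exact (cand_set_measurable n x k).compl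

lemma sum_supp {n : ℕ} {x : Fin n → ℝ} (hx : memSimplex n x) :
    ∑ j ∈ supp n x, x j = 1 := by
  classical
  rw [supp]
  rw [Finset.sum_filter_of_ne (fun j _ h => lt_of_le_of_ne (hx.1 j).1 (Ne.symm h))]
  exact hx.2

lemma Sset_measure {m : ℕ} {x : Fin (m+1) → ℝ} (hx : memSimplex (m+1) x) {i : Fin (m+1)}
    (hi : 0 < x i) : piExp (m+1) (Sset (m+1) x i) = ENNReal.ofReal (x i) := by
  classical
  have hset : Sset (m+1) x i = {ω | ∀ j, j ≠ i → (x j / x i) * ω i < ω j} := by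
    ext ω
    simp only [Sset, Set.mem_setOf_eq]
    refine forall_congr' fun j => imp_congr_right fun hj => ?_
    rw [div_mul_eq_mul_div, div_lt_iff₀ hi, mul_comm (ω j) (x i)]
  rw [hset, core_measure i _ (fun j => div_nonneg (hx.1 j).1 hi.le)]
  congr 1
  have h1 : (∑ j, if j = i then 0 else x j / x i) = ∑ j ∈ Finset.univ.erase i, x j / x i := by
    rw [← Finset.add_sum_erase _ _ (Finset.mem_univ i)]
    rw [if_pos rfl, zero_add]
    exact Finset.sum_congr rfl fun j hj => if_neg (Finset.ne_of_mem_erase hj)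
  have h2 : ∑ j ∈ Finset.univ.erase i, x j / x i = (1 - x i) / x i := by
    rw [← Finset.sum_div, Finset.sum_erase_eq_sub (Finset.mem_univ i), hx.2]
  rw [h1, h2]
  field_simp
  ring

lemma coord_nonpos_null {m : ℕ} (i : Fin (m+1)) :
    piExp (m+1) {ω : Fin (m+1) → ℝ | ω i ≤ 0} = 0 := by
  classical
  have hset : {ω : Fin (m+1) → ℝ | ω i ≤ 0}
      = Set.pi Set.univ (fun j => if j = i then Set.Iic 0 else Set.univ) := by
    ext ω
    simp only [Set.mem_setOf_eq, Set.mem_pi, Set.mem_univ, forall_true_left]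
    constructor
    · intro h j
      by_cases hj : j = i
      · subst hj; simpa using h
      · simp [hj]
    · intro h
      have := h i
      simpa using this
  rw [hset, piExp, Measure.pi_pi]
  apply Finset.prod_eq_zero (Finset.mem_univ i)
  simp [expM_Iic]

lemma pick_measure {m : ℕ} {x : Fin (m+1) → ℝ} (hx : memSimplex (m+1) x) (i₀ i : Fin (m+1)) :
    piExp (m+1) {ω | pick (m+1) i₀ ω x = i} = ENNReal.ofReal (x i) := by
  classical
  by_cases hi : 0 < x i
  · refine le_antisymm ?_ ?_
    · -- upper bound
      set U : Set (Fin (m+1) → ℝ) := ⋃ j ∈ (supp (m+1) x).erase i, Sset (m+1) x j with hU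
      have hUmeas : MeasurableSet U :=
        MeasurableSet.biUnion (Finset.countable_toSet _) fun j _ => Sset_measurable _ _ _
      have hdisj : Disjoint {ω | pick (m+1) i₀ ω x = i} U := by
        rw [Set.disjoint_left]
        intro ω hω hωU
        rw [Set.mem_setOf_eq] at hω
        rw [hU, Set.mem_iUnion₂] at hωU
        obtain ⟨j, hj, hωj⟩ := hωU
        have hj' : 0 < x j := mem_supp.1 (Finset.mem_of_mem_erase hj)
        have := Sset_subset_pick hx i₀ hj' hωj
        rw [Set.mem_setOf_eq] at this
        exact (Finset.ne_of_mem_erase hj) (this.symm.trans hω)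
      have hUmeasure : piExp (m+1) U = ∑ j ∈ (supp (m+1) x).erase i, ENNReal.ofReal (x j) := by
        rw [hU, measure_biUnion_finset ?_ (fun j _ => Sset_measurable _ _ _)]
        · exact Finset.sum_congr rfl fun j hj =>
            Sset_measure hx (mem_supp.1 (Finset.mem_of_mem_erase hj))
        · intro j hj k hk hjk
          rw [Function.onFun, Set.disjoint_iff_inter_eq_empty]
          exact Sset_disjoint hjk
      have hle : piExp (m+1) {ω | pick (m+1) i₀ ω x = i} + piExp (m+1) U ≤ 1 := by
        rw [← measure_union hdisj hUmeas]
        exact prob_le_one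
      have hone : ENNReal.ofReal (x i) + ∑ j ∈ (supp (m+1) x).erase i, ENNReal.ofReal (x j)
          = 1 := by
        rw [← ENNReal.ofReal_sum_of_nonneg (fun j hj =>
          (hx.1 j).1), ← ENNReal.ofReal_add (hx.1 i).1 (Finset.sum_nonneg fun j _ => (hx.1 j).1)]
        rw [Finset.add_sum_erase _ _ (mem_supp.2 hi), sum_supp hx]
        simp
      rw [hUmeasure] at hle
      have hfin : (∑ j ∈ (supp (m+1) x).erase i, ENNReal.ofReal (x j)) ≠ ⊤ :=
        (ENNReal.sum_lt_top.2 fun j _ => ENNReal.ofReal_lt_top).ne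
      rw [← hone] at hle
      exact (ENNReal.add_le_add_iff_right hfin).1 hle
    · rw [← Sset_measure hx hi]
      exact measure_mono (Sset_subset_pick hx i₀ hi)
  · have hxi : x i = 0 := le_antisymm (not_lt.1 hi) (hx.1 i).1
    have hempty : {ω | pick (m+1) i₀ ω x = i} = ∅ := by
      ext ω
      simp only [Set.mem_setOf_eq, Set.mem_empty_iff_false, iff_false]
      intro h
      exact hi (mem_supp.1 (h ▸ pick_mem_supp hx i₀ ω))
    rw [hempty, hxi]
    simp

lemma agree_lower {m : ℕ} {x y : Fin (m+1) → ℝ} (hx : memSimplex (m+1) x)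
    (hy : memSimplex (m+1) y) {i : Fin (m+1)} (hxi : 0 < x i) (hyi : 0 < y i) :
    ENNReal.ofReal (min (x i) (y i) / ∑ j, max (x j) (y j))
      ≤ piExp (m+1) (Sset (m+1) x i ∩ Sset (m+1) y i) := by
  classical
  set M := ∑ j, max (x j) (y j) with hM
  set c : Fin (m+1) → ℝ := fun j => if j = i then 0 else max (x j / x i) (y j / y i) with hc
  have hcnn : ∀ j, 0 ≤ c j := by
    intro j
    by_cases h : j = i
    · simp [hc, h]
    · simp only [hc, if_neg h]
      exact le_max_of_le_left (div_nonneg (hx.1 j).1 hxi.le)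
  have hT := core_measure i c hcnn
  set T : Set (Fin (m+1) → ℝ) := {ω | ∀ j, j ≠ i → c j * ω i < ω j} with hTdef
  have hsum0 : (∑ j, if j = i then 0 else c j) = ∑ j, c j := by
    refine Finset.sum_congr rfl fun j _ => ?_
    by_cases h : j = i <;> simp [h, hc]
  rw [hsum0] at hT
  have hTP : T ∩ {ω | 0 < ω i} ⊆ Sset (m+1) x i ∩ Sset (m+1) y i := by
    rintro ω ⟨h1, h2⟩
    rw [Set.mem_setOf_eq] at h2
    have key : ∀ (z : Fin (m+1) → ℝ), 0 < z i → (∀ j, j ≠ i → z j / z i ≤ c j) →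
        ω ∈ Sset (m+1) z i := by
      intro z hzi hzc j hj
      have hcj := h1 j hj
      have : (z j / z i) * ω i ≤ c j * ω i :=
        mul_le_mul_of_nonneg_right (hzc j hj) h2.le
      have hlt : (z j / z i) * ω i < ω j := lt_of_le_of_lt this hcj
      rw [div_mul_eq_mul_div, div_lt_iff₀ hzi] at hlt
      linarith [hlt, mul_comm (ω j) (z i)]
    exact ⟨key x hxi (fun j hj => by simp only [hc, if_neg hj]; exact le_max_left _ _),
      key y hyi (fun j hj => by simp only [hc, if_neg hj]; exact le_max_right _ _)⟩
  have hTmono : piExp (m+1) T ≤ piExp (m+1) (T ∩ {ω | 0 < ω i}) := by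
    have hsub : T ⊆ (T ∩ {ω | 0 < ω i}) ∪ {ω : Fin (m+1) → ℝ | ω i ≤ 0} := by
      intro ω hω
      by_cases h : 0 < ω i
      · exact Or.inl ⟨hω, h⟩
      · exact Or.inr (not_lt.1 h)
    calc piExp (m+1) T ≤ piExp (m+1) ((T ∩ {ω | 0 < ω i}) ∪ {ω : Fin (m+1) → ℝ | ω i ≤ 0}) :=
          measure_mono hsub
      _ ≤ piExp (m+1) (T ∩ {ω | 0 < ω i}) + piExp (m+1) {ω : Fin (m+1) → ℝ | ω i ≤ 0} :=
          measure_union_le _ _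
      _ = piExp (m+1) (T ∩ {ω | 0 < ω i}) := by rw [coord_nonpos_null]; ring
  have hreal : min (x i) (y i) / M ≤ 1 / (1 + ∑ j, c j) := by
    have hmnn : 0 ≤ min (x i) (y i) := le_min hxi.le hyi.le
    have hMpos : (0:ℝ) < M := by
      have : (1:ℝ) ≤ M := by
        rw [hM, ← hx.2]
        exact Finset.sum_le_sum fun j _ => le_max_left _ _
      linarith
    have hcpos : (0:ℝ) < 1 + ∑ j, c j :=
      lt_add_of_pos_of_le one_pos (Finset.sum_nonneg fun j _ => hcnn j)
    rw [div_le_div_iff₀ hMpos hcpos, one_mul]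
    have hkey : ∀ j ∈ Finset.univ.erase i, min (x i) (y i) * c j ≤ max (x j) (y j) := by
      intro j hj
      have hjne : j ≠ i := Finset.ne_of_mem_erase hj
      simp only [hc, if_neg hjne]
      rw [mul_max_of_nonneg _ _ hmnn]
      refine max_le ?_ ?_
      · refine le_trans ?_ (le_max_left (x j) (y j))
        rw [mul_div_assoc', div_le_iff₀ hxi]
        nlinarith [(hx.1 j).1, min_le_left (x i) (y i)]
      · refine le_trans ?_ (le_max_right (x j) (y j))
        rw [mul_div_assoc', div_le_iff₀ hyi]
        nlinarith [(hy.1 j).1, min_le_right (x i) (y i)]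
    have hci : min (x i) (y i) * c i = 0 := by simp [hc]
    calc min (x i) (y i) * (1 + ∑ j, c j)
        = min (x i) (y i) + ∑ j, min (x i) (y i) * c j := by
          rw [mul_add, mul_one, Finset.mul_sum]
      _ = min (x i) (y i) + ∑ j ∈ Finset.univ.erase i, min (x i) (y i) * c j := by
          congr 1
          exact (Finset.sum_erase (f := fun j => min (x i) (y i) * c j) Finset.univ hci).symm
      _ ≤ max (x i) (y i) + ∑ j ∈ Finset.univ.erase i, max (x j) (y j) :=
          add_le_add (min_le_max) (Finset.sum_le_sum hkey)
      _ = M := by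
          rw [hM]
          exact Finset.add_sum_erase _ (fun j => max (x j) (y j)) (Finset.mem_univ i)
  calc ENNReal.ofReal (min (x i) (y i) / M)
      ≤ ENNReal.ofReal (1 / (1 + ∑ j, c j)) := ENNReal.ofReal_le_ofReal hreal
    _ = piExp (m+1) T := hT.symm
    _ ≤ piExp (m+1) (T ∩ {ω | 0 < ω i}) := hTmono
    _ ≤ piExp (m+1) (Sset (m+1) x i ∩ Sset (m+1) y i) := measure_mono hTP

lemma symmDiff_singleton_card {n : ℕ} (a b : Fin n) :
    ((symmDiff ({a} : Finset (Fin n)) {b}).card : ℝ≥0∞) = if a = b then 0 else 2 := by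
  classical
  by_cases h : a = b
  · subst h
    simp [symmDiff_self]
  · rw [if_neg h]
    have hset : symmDiff ({a} : Finset (Fin n)) {b} = {a, b} := by
      ext c
      rw [Finset.mem_symmDiff]
      simp only [Finset.mem_singleton, Finset.mem_insert]
      constructor
      · rintro (⟨rfl, _⟩ | ⟨rfl, _⟩)
        · exact Or.inl rfl
        · exact Or.inr rfl
      · rintro (rfl | rfl)
        · exact Or.inl ⟨rfl, h⟩
        · exact Or.inr ⟨rfl, fun hc => h hc.symm⟩
    rw [hset, Finset.card_insert_of_notMem (by simp [h]), Finset.card_singleton]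
    norm_num

/-- For every `n ≥ 1` there exists a `2`-stretch correlated sampling algorithm for the
probability simplex `Δ_n`. -/
theorem statement1 (n : ℕ) (hn : 1 ≤ n) :
    ∃ (Ω : Type) (mΩ : MeasurableSpace Ω) (μ : @Measure Ω mΩ)
      (A : Ω → (Fin n → ℝ) → Finset (Fin n)),
      @IsProbabilityMeasure Ω mΩ μ ∧
      @SimplexCorrSampling n 2 Ω mΩ μ A := by
  classical
  obtain ⟨m, rfl⟩ : ∃ m, n = m + 1 := ⟨n - 1, by omega⟩
  set i₀ : Fin (m+1) := ⟨0, by omega⟩ with hi₀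
  refine ⟨Fin (m+1) → ℝ, inferInstance, piExp (m+1),
    fun ω x => {pick (m+1) i₀ ω x}, inferInstance, ?_, ?_, ?_⟩
  · intro ω x _
    simp
  · intro x hx i
    have hset : {ω : Fin (m+1) → ℝ | i ∈ ({pick (m+1) i₀ ω x} : Finset (Fin (m+1)))}
        = {ω : Fin (m+1) → ℝ | pick (m+1) i₀ ω x = i} := by
      ext ω
      simp [eq_comm]
    rw [hset]
    exact ⟨pick_set_measurable hx i₀ i, pick_measure hx i₀ i⟩
  · intro x y hx hy
    set D : Set (Fin (m+1) → ℝ) := {ω | pick (m+1) i₀ ω x ≠ pick (m+1) i₀ ω y} with hD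
    have hDmeas : MeasurableSet D := by
      have : D = ⋃ i, ({ω : Fin (m+1) → ℝ | pick (m+1) i₀ ω x = i}
          ∩ {ω : Fin (m+1) → ℝ | pick (m+1) i₀ ω y = i}ᶜ) := by
        ext ω
        simp only [hD, Set.mem_setOf_eq, Set.mem_iUnion, Set.mem_inter_iff, Set.mem_compl_iff]
        constructor
        · intro h
          exact ⟨pick (m+1) i₀ ω x, rfl, fun hc => h hc.symm⟩
        · rintro ⟨i, h1, h2⟩ he
          exact h2 (he ▸ h1)
      rw [this]
      exact MeasurableSet.iUnion fun i =>
        (pick_set_measurable hx i₀ i).inter (pick_set_measurable hy i₀ i).compl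
    have hfun : (fun ω => ((symmDiff ({pick (m+1) i₀ ω x} : Finset (Fin (m+1)))
        {pick (m+1) i₀ ω y}).card : ℝ≥0∞)) = D.indicator (fun _ => 2) := by
      funext ω
      rw [symmDiff_singleton_card]
      by_cases h : pick (m+1) i₀ ω x = pick (m+1) i₀ ω y
      · rw [if_pos h, Set.indicator_of_notMem (by simp [hD, h])]
      · rw [if_neg h, Set.indicator_of_mem (by exact h)]
    rw [hfun, lintegral_indicator_const hDmeas]
    -- numeric bound
    set M := ∑ j, max (x j) (y j) with hM
    set s := ∑ j, min (x j) (y j) with hs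
    set d := ∑ j, |x j - y j| with hd
    have hM1 : (1:ℝ) ≤ M := by
      rw [hM, ← hx.2]
      exact Finset.sum_le_sum fun j _ => le_max_left _ _
    have hMpos : (0:ℝ) < M := lt_of_lt_of_le one_pos hM1
    have hsnn : 0 ≤ s := Finset.sum_nonneg fun j _ => le_min (hx.1 j).1 (hy.1 j).1
    have hdMs : d = M - s := by
      rw [hd, hM, hs, ← Finset.sum_sub_distrib]
      refine Finset.sum_congr rfl fun j _ => ?_
      rcases le_total (x j) (y j) with h | h
      · rw [max_eq_right h, min_eq_left h, abs_of_nonpos (by linarith)]; ring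
      · rw [max_eq_left h, min_eq_right h, abs_of_nonneg (by linarith)]
    have hsM : s ≤ M := by
      rw [hM, hs]
      exact Finset.sum_le_sum fun j _ => min_le_max
    -- agreement events
    set K : Finset (Fin (m+1)) := supp (m+1) x ∩ supp (m+1) y with hK
    have hcompl : ENNReal.ofReal (s / M) ≤ piExp (m+1) Dᶜ := by
      have hsub : (⋃ i ∈ K, Sset (m+1) x i ∩ Sset (m+1) y i) ⊆ Dᶜ := by
        intro ω hω
        rw [Set.mem_iUnion₂] at hω
        obtain ⟨i, hiK, hω1, hω2⟩ := hω
        rw [hK, Finset.mem_inter] at hiK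
        have e1 := Sset_subset_pick hx i₀ (mem_supp.1 hiK.1) hω1
        have e2 := Sset_subset_pick hy i₀ (mem_supp.1 hiK.2) hω2
        rw [Set.mem_setOf_eq] at e1 e2
        simp only [Set.mem_compl_iff, hD, Set.mem_setOf_eq, not_not]
        rw [e1, e2]
      have hdisjK : (K : Set (Fin (m+1))).PairwiseDisjoint
          (fun i => Sset (m+1) x i ∩ Sset (m+1) y i) := by
        intro i _ j _ hij
        rw [Function.onFun, Set.disjoint_left]
        intro ω h1 h2
        have := Sset_disjoint (x := x) hij
        have hmem : ω ∈ Sset (m+1) x i ∩ Sset (m+1) x j := ⟨h1.1, h2.1⟩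
        rw [this] at hmem
        exact hmem
      have hmeasU := measure_biUnion_finset hdisjK
        (fun i _ => ((Sset_measurable _ x i).inter (Sset_measurable _ y i)))
        (μ := piExp (m+1))
      calc ENNReal.ofReal (s / M)
          = ∑ i ∈ K, ENNReal.ofReal (min (x i) (y i) / M) := by
            rw [← ENNReal.ofReal_sum_of_nonneg (fun i _ =>
              div_nonneg (le_min (hx.1 i).1 (hy.1 i).1) hMpos.le)]
            congr 1
            rw [← Finset.sum_div, hs]
            congr 1
            refine (Finset.sum_subset (Finset.subset_univ K) fun i _ hiK => ?_).symm
            rw [hK, Finset.mem_inter, not_and_or] at hiK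
            rcases hiK with h | h
            · rw [mem_supp] at h
              have : x i = 0 := le_antisymm (not_lt.1 h) (hx.1 i).1
              rw [min_eq_left (by rw [this]; exact (hy.1 i).1), this]
            · rw [mem_supp] at h
              have : y i = 0 := le_antisymm (not_lt.1 h) (hy.1 i).1
              rw [min_eq_right (by rw [this]; exact (hx.1 i).1), this]
        _ ≤ ∑ i ∈ K, piExp (m+1) (Sset (m+1) x i ∩ Sset (m+1) y i) := by
            refine Finset.sum_le_sum fun i hiK => ?_
            rw [hK, Finset.mem_inter] at hiK
            exact agree_lower hx hy (mem_supp.1 hiK.1) (mem_supp.1 hiK.2)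
        _ = piExp (m+1) (⋃ i ∈ K, Sset (m+1) x i ∩ Sset (m+1) y i) := hmeasU.symm
        _ ≤ piExp (m+1) Dᶜ := measure_mono hsub
    have hDbound : piExp (m+1) D ≤ ENNReal.ofReal d := by
      have htotal : piExp (m+1) D + piExp (m+1) Dᶜ = 1 := by
        rw [measure_add_measure_compl hDmeas]
        exact measure_univ
      have hreal : (1:ℝ) ≤ d + s / M := by
        have h1 : 1 - s / M ≤ (M - s) / M := by
          rw [sub_div, div_self hMpos.ne']
        have h2 : (M - s) / M ≤ M - s := div_le_self (by linarith) hM1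
        linarith
      have hle1 : (1:ℝ≥0∞) ≤ ENNReal.ofReal d + piExp (m+1) Dᶜ := by
        calc (1:ℝ≥0∞) = ENNReal.ofReal 1 := by simp
          _ ≤ ENNReal.ofReal (d + s / M) := ENNReal.ofReal_le_ofReal hreal
          _ = ENNReal.ofReal d + ENNReal.ofReal (s / M) := by
              rw [ENNReal.ofReal_add (by rw [hdMs]; linarith) (by positivity)]
          _ ≤ ENNReal.ofReal d + piExp (m+1) Dᶜ := add_le_add le_rfl hcompl
      rw [← htotal] at hle1
      exact (ENNReal.add_le_add_iff_right (measure_ne_top _ _)).1 hle1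
    calc (2:ℝ≥0∞) * piExp (m+1) D ≤ 2 * ENNReal.ofReal d :=
          mul_le_mul_right hDbound 2
      _ = ENNReal.ofReal (2 * d) := by
          rw [ENNReal.ofReal_mul (by norm_num : (0:ℝ) ≤ 2)]
          norm_num
      _ = ENNReal.ofReal (2 * ∑ i, |x i - y i|) := by rw [hd]
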